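/- For all α ∈ F_3, β ∈ F and γ ∈ F∖{0}, one has 9·#{d ∈ D_{α,β} : Tr(γ·d) ≠ 0} = 2q + 2·w(α,β) − w(α, β+γ) − w(α, β−γ). -/

import Mathlib

open scoped Classical

noncomputable section

def zeta3 : ℂ := Complex.exp (2 * Real.pi * Complex.I / 3)

def chi (F : Type*) [Field F] [Fintype F] [Algebra (ZMod 3) F] (c : F) : ℂ :=
  zeta3 ^ (Algebra.trace (ZMod 3) F c).val

def Ssum (F : Type*) [Field F] [Fintype F] [Algebra (ZMod 3) F] (N : ℕ) (a b : F) : ℂ :=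
  ∑ x : Fˣ, chi F (a * (x : F) ^ ((Fintype.card F - 1) / N) + b * (x : F))

def wab (F : Type*) [Field F] [Fintype F] [Algebra (ZMod 3) F] (N : ℕ) (α : ZMod 3) (β : F) : ℂ :=
  zeta3 ^ (-α).val * Ssum F N 1 β + zeta3 ^ α.val * Ssum F N 2 (2 * β)

def Dset (F : Type*) [Field F] [Fintype F] [Algebra (ZMod 3) F] (N : ℕ) (α : ZMod 3) (β : F) : Set F :=
  {x | x ≠ 0 ∧ Algebra.trace (ZMod 3) F (x ^ ((Fintype.card F - 1) / N) + β * x) = α}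

def wtd (F : Type*) [Field F] [Fintype F] [Algebra (ZMod 3) F] (N : ℕ) (α : ZMod 3) (β γ : F) : ℕ :=
  Set.ncard {d ∈ Dset F N α β | Algebra.trace (ZMod 3) F (γ * d) ≠ 0}

def codeMap (F : Type*) [Field F] [Fintype F] [Algebra (ZMod 3) F] (N : ℕ) (α : ZMod 3) (β : F) :
    F → (↥(Dset F N α β) → ZMod 3) :=
  fun x d => Algebra.trace (ZMod 3) F ((d : F) * x)

def sqrtq (F : Type*) [Fintype F] : ℝ := Real.sqrt (Fintype.card F)

def Ind {F : Type*} [Monoid F] (g x : F) : ℕ := sInf {k : ℕ | x = g ^ k}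

def jmod {F : Type*} [Monoid F] (N : ℕ) (g x : F) : ℕ := ((-(Ind g x : ℤ)) % (N : ℤ)).toNat

def J1p1 (ℓ m j : ℕ) : Prop := 1 ≤ j ∧ j ≤ (ℓ - 1) * ℓ ^ (m - 1) ∧ ¬ ℓ ^ (m - 1) ∣ j
def J1p2 (ℓ m j : ℕ) : Prop := 1 ≤ j ∧ j ≤ (ℓ - 1) * ℓ ^ (m - 1) ∧ ℓ ^ (m - 1) ∣ j ∧ ¬ 2 ∣ j
def J1p3 (ℓ m j : ℕ) : Prop := 1 ≤ j ∧ j ≤ (ℓ - 1) * ℓ ^ (m - 1) ∧ 2 * ℓ ^ (m - 1) ∣ j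
def J2mem (ℓ m j : ℕ) : Prop := (ℓ - 1) * ℓ ^ (m - 1) < j ∧ j ≤ ℓ ^ m
def J3p1 (ℓ m j : ℕ) : Prop := (ℓ ^ m < j ∧ j ≤ 2 * ℓ ^ m - ℓ ^ (m - 1)) ∧ ¬ ℓ ^ (m - 1) ∣ j
def J3p2 (ℓ m j : ℕ) : Prop := ∃ k, 1 ≤ k ∧ k ≤ ℓ - 1 ∧ k % 2 = 0 ∧ j = ℓ ^ m + k * ℓ ^ (m - 1)
def J3p3 (ℓ m j : ℕ) : Prop := ∃ k, 1 ≤ k ∧ k ≤ ℓ - 1 ∧ k % 2 = 1 ∧ j = ℓ ^ m + k * ℓ ^ (m - 1)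
def J4mem (ℓ m j : ℕ) : Prop := 2 * ℓ ^ m - ℓ ^ (m - 1) < j ∧ j ≤ 2 * ℓ ^ m - 1
def Jp (ℓ m j : ℕ) : Prop := j = 0 ∨ J1p1 ℓ m j ∨ J2mem ℓ m j ∨ J3p1 ℓ m j ∨ J4mem ℓ m j
def Jpp (ℓ m j : ℕ) : Prop := J1p1 ℓ m j ∨ (J2mem ℓ m j ∧ j ≠ ℓ ^ m) ∨ J3p1 ℓ m j ∨ J4mem ℓ m j

/- ===== auxiliary lemmas ===== -/

lemma zeta3_pow_three : zeta3 ^ 3 = 1 := by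
  rw [zeta3, ← Complex.exp_nat_mul]
  norm_num
  rw [show (3:ℂ) * (2 * Real.pi * Complex.I / 3) = 2 * Real.pi * Complex.I by ring]
  exact Complex.exp_two_pi_mul_I

lemma zeta3_ne_one : zeta3 ≠ 1 := by
  intro h
  rw [zeta3, Complex.exp_eq_one_iff] at h
  obtain ⟨n, hn⟩ := h
  have h2 : (2 * Real.pi * Complex.I : ℂ) ≠ 0 := by
    simp [Complex.I_ne_zero, Real.pi_ne_zero, Complex.ofReal_ne_zero]
  have h4 : (((3*n - 1 : ℤ)) : ℂ) * (2 * Real.pi * Complex.I) = 0 := by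
    push_cast
    field_simp at hn
    linear_combination (-(2 * Real.pi * Complex.I)) * hn
  have h5 := (mul_eq_zero.mp h4).resolve_right h2
  have h6 : (3*n - 1 : ℤ) = 0 := by exact_mod_cast h5
  omega

lemma sum_zeta3 : 1 + zeta3 + zeta3 ^ 2 = 0 := by
  have h : (zeta3 - 1) * (zeta3 ^ 2 + zeta3 + 1) = 0 := by
    linear_combination zeta3_pow_three
  rcases mul_eq_zero.mp h with h1 | h2
  · exact absurd (sub_eq_zero.mp h1) zeta3_ne_one
  · linear_combination h2

/-- The cube-root-of-unity character on `ZMod 3`. -/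
def ch (t : ZMod 3) : ℂ := zeta3 ^ t.val

lemma zeta3_pow_mod (n : ℕ) : zeta3 ^ (n % 3) = zeta3 ^ n := by
  conv_rhs => rw [← Nat.div_add_mod n 3]
  rw [pow_add, pow_mul, zeta3_pow_three, one_pow, one_mul]

lemma ch_add (a b : ZMod 3) : ch (a + b) = ch a * ch b := by
  rw [ch, ch, ch, ZMod.val_add, zeta3_pow_mod, pow_add]

lemma ch0 : ch 0 = 1 := by rw [ch, show (0:ZMod 3).val = 0 from rfl, pow_zero]
lemma ch1 : ch 1 = zeta3 := by rw [ch, show (1:ZMod 3).val = 1 from rfl, pow_one]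
lemma ch2 : ch 2 = zeta3 ^ 2 := by rw [ch, show (2:ZMod 3).val = 2 from rfl]

lemma univ3 : (Finset.univ : Finset (ZMod 3)) = {0, 1, 2} := by decide

lemma sum3 (f : ZMod 3 → ℂ) : ∑ u : ZMod 3, f u = f 0 + f 1 + f 2 := by
  rw [univ3, Finset.sum_insert (by decide), Finset.sum_insert (by decide),
    Finset.sum_singleton, add_assoc]

lemma sum_ch (t : ZMod 3) : ∑ u : ZMod 3, ch (u * t) = if t = 0 then 3 else 0 := by
  have hall : ∀ s : ZMod 3, s = 0 ∨ s = 1 ∨ s = 2 := by decide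
  rw [sum3]
  rcases hall t with h|h|h <;> subst h
  · norm_num [ch0]
  · rw [show (0:ZMod 3)*1 = 0 by decide, show (1:ZMod 3)*1 = 1 by decide,
      show (2:ZMod 3)*1 = 2 by decide, ch0, ch1, ch2]
    simp only [if_neg (by decide : (1:ZMod 3) ≠ 0)]
    linear_combination sum_zeta3
  · rw [show (0:ZMod 3)*2 = 0 by decide, show (1:ZMod 3)*2 = 2 by decide,
      show (2:ZMod 3)*2 = 1 by decide, ch0, ch1, ch2]
    simp only [if_neg (by decide : (2:ZMod 3) ≠ 0)]
    linear_combination sum_zeta3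

lemma ch_ne_one {t : ZMod 3} (h : t ≠ 0) : ch t ≠ 1 := by
  have hall : ∀ s : ZMod 3, s ≠ 0 → s = 1 ∨ s = 2 := by decide
  rcases hall t h with h|h <;> subst h
  · rw [ch1]; exact zeta3_ne_one
  · rw [ch2]; intro hc
    have h1 : zeta3 * zeta3 ^ 2 = 1 := by linear_combination zeta3_pow_three
    rw [hc, mul_one] at h1
    exact zeta3_ne_one h1

/-- pointwise indicator identity -/
lemma indicator_eq (α t b : ZMod 3) :
    (9:ℂ) * (if t = α ∧ b ≠ 0 then 1 else 0) =
      (∑ u : ZMod 3, ch (u * (t - α))) * (3 - ∑ v : ZMod 3, ch (v * b)) := by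
  rw [sum_ch, sum_ch]
  by_cases h1 : t = α <;> by_cases h2 : b = 0 <;>
    simp [h1, h2, sub_eq_zero] <;> norm_num

lemma point_eq (u α t b : ZMod 3) :
    ch (u * (t - α)) * (3 - ∑ v : ZMod 3, ch (v * b)) =
      ch (-(u*α)) * (3 * ch (u*t + 0*b) - ∑ v : ZMod 3, ch (u*t + v*b)) := by
  have h1 : ch (u*(t - α)) = ch (-(u*α)) * ch (u*t) := by
    rw [← ch_add]; congr 1; ring
  have h2 : ch (u*t) * (∑ v : ZMod 3, ch (v*b)) = ∑ v : ZMod 3, ch (u*t + v*b) := by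
    rw [Finset.mul_sum]; exact Finset.sum_congr rfl fun v _ => (ch_add _ _).symm
  have h3 : ch (u*t + 0*b) = ch (u*t) := by congr 1; ring
  rw [h3, h1, ← h2]; ring

section FieldLemmas

variable (F : Type*) [Field F] [Fintype F] [Algebra (ZMod 3) F]

lemma chi_eq' (c : F) : chi F c = ch (Algebra.trace (ZMod 3) F c) := rfl

lemma chi_add' (a b : F) : chi F (a + b) = chi F a * chi F b := by
  rw [chi_eq', chi_eq', chi_eq', map_add, ch_add]

lemma trace_alg (u : ZMod 3) (y : F) :
    Algebra.trace (ZMod 3) F (algebraMap (ZMod 3) F u * y) =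
      u * Algebra.trace (ZMod 3) F y := by
  rw [← Algebra.smul_def, map_smul, smul_eq_mul]

lemma exists_trace_ne (c : F) (hc : c ≠ 0) :
    ∃ b, Algebra.trace (ZMod 3) F (c * b) ≠ 0 := by
  haveI : Fact (Nat.Prime 3) := ⟨by norm_num⟩
  have htr := (traceForm_nondegenerate (ZMod 3) F).1 c
  simp_rw [Algebra.traceForm_apply] at htr
  by_contra! hf
  exact hc (htr hf)

lemma sum_units_eq (f : F → ℂ) : ∑ y : F, f y = f 0 + ∑ x : Fˣ, f x := by
  classical
  haveI : Fintype {a : F // a ≠ 0} := Fintype.ofFinite _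
  have h2 : (∑ y ∈ Finset.univ.filter (fun a : F => a ≠ 0), f y)
      = ∑ y : {a : F // a ≠ 0}, f ↑y := Finset.sum_subtype _ (by simp) f
  have h1 : ∑ x : Fˣ, f ↑x = ∑ y : {a : F // a ≠ 0}, f ↑y :=
    Fintype.sum_equiv unitsEquivNeZero _ _ (fun x => rfl)
  have h3 : (Finset.univ : Finset F) = insert (0:F) (Finset.univ.filter (fun a : F => a ≠ 0)) := by
    ext y
    simp [eq_comm, em]
  rw [h3, Finset.sum_insert (by simp), h2, ← h1]

lemma sum_chi_eq_zero (c : F) (hc : c ≠ 0) : ∑ y : F, chi F (c * y) = 0 := by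
  obtain ⟨b, hb⟩ := exists_trace_ne F c hc
  have key : chi F (c * b) * (∑ y : F, chi F (c * y)) = ∑ y : F, chi F (c * y) := by
    rw [Finset.mul_sum]
    calc ∑ y : F, chi F (c * b) * chi F (c * y)
        = ∑ y : F, chi F (c * (b + y)) := by
          refine Finset.sum_congr rfl fun y _ => ?_
          rw [mul_add, chi_add']
      _ = ∑ y : F, chi F (c * y) :=
          Fintype.sum_equiv (Equiv.addLeft b) _ _ (fun y => rfl)
  have h2 : (chi F (c * b) - 1) * (∑ y : F, chi F (c * y)) = 0 := by
    linear_combination key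
  rcases mul_eq_zero.mp h2 with h | h
  · exact absurd (sub_eq_zero.mp h) (by rw [chi_eq']; exact ch_ne_one hb)
  · exact h

lemma sum_chi_units (c : F) (hc : c ≠ 0) : ∑ x : Fˣ, chi F (c * x) = -1 := by
  have h0 := sum_units_eq F (fun y => chi F (c * y))
  have := sum_chi_eq_zero F c hc
  rw [h0] at this
  have hch0 : chi F (c * 0) = 1 := by
    rw [mul_zero, chi_eq', map_zero, ch0]
  rw [hch0] at this
  linear_combination this

lemma charF3 : (3 : F) = 0 := by
  haveI : Fact (Nat.Prime 3) := ⟨by norm_num⟩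
  haveI : CharP F 3 := charP_of_injective_algebraMap (algebraMap (ZMod 3) F).injective 3
  exact_mod_cast CharP.cast_eq_zero F 3

lemma twoF_ne_zero : (2 : F) ≠ 0 := by
  intro h
  have h1 : (1:F) = 3 - 2 := by norm_num
  rw [charF3, h] at h1
  norm_num at h1

/-- generic exponential sum -/
def Sg (s : ℕ) (a b : F) : ℂ := ∑ x : Fˣ, chi F (a * (x:F) ^ s + b * (x:F))

/-- trace functions -/
def Tm (s : ℕ) (β : F) (x : F) : ZMod 3 := Algebra.trace (ZMod 3) F (x ^ s + β * x)
def Bm (γ : F) (x : F) : ZMod 3 := Algebra.trace (ZMod 3) F (γ * x)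

/-- double character sums -/
def Cs (s : ℕ) (β γ : F) (u v : ZMod 3) : ℂ :=
  ∑ x : Fˣ, ch (u * Tm F s β ↑x + v * Bm F γ ↑x)

lemma Cs_eq (s : ℕ) (β γ : F) (u v : ZMod 3) (c : F)
    (hc : algebraMap (ZMod 3) F u * β + algebraMap (ZMod 3) F v * γ = c) :
    Cs F s β γ u v =
      ∑ x : Fˣ, chi F (algebraMap (ZMod 3) F u * (x:F) ^ s + c * (x:F)) := by
  rw [Cs]
  refine Finset.sum_congr rfl fun x _ => ?_
  rw [Tm, Bm, ← hc, chi_eq', ← trace_alg F u, ← trace_alg F v, ← map_add]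
  congr 2
  ring

lemma Cs00 (s : ℕ) (β γ : F) : Cs F s β γ 0 0 = (Fintype.card F : ℂ) - 1 := by
  rw [Cs_eq F s β γ 0 0 0 (by simp)]
  have h : ∀ x : Fˣ, chi F (algebraMap (ZMod 3) F 0 * (x:F) ^ s + 0 * (x:F)) = 1 := by
    intro x
    rw [map_zero, zero_mul, zero_mul, add_zero, chi_eq', map_zero, ch0]
  rw [Finset.sum_congr rfl (fun x _ => h x), Finset.sum_const, nsmul_eq_mul, mul_one,
    Finset.card_univ, Fintype.card_units, Nat.cast_sub Fintype.card_pos, Nat.cast_one]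

lemma Cs0v (s : ℕ) (β γ : F) (v : ZMod 3) (c : F) (hc : algebraMap (ZMod 3) F v * γ = c)
    (hc0 : c ≠ 0) : Cs F s β γ 0 v = -1 := by
  rw [Cs_eq F s β γ 0 v c (by rw [map_zero, zero_mul, zero_add, hc])]
  have h : ∀ x : Fˣ, chi F (algebraMap (ZMod 3) F 0 * (x:F) ^ s + c * (x:F))
      = chi F (c * (x:F)) := by
    intro x
    rw [map_zero, zero_mul, zero_add]
  rw [Finset.sum_congr rfl (fun x _ => h x), sum_chi_units F c hc0]

lemma Cs1v (s : ℕ) (β γ : F) (v : ZMod 3) (c : F)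
    (hc : β + algebraMap (ZMod 3) F v * γ = c) :
    Cs F s β γ 1 v = Sg F s 1 c := by
  rw [Cs_eq F s β γ 1 v c (by rw [map_one, one_mul, hc]), Sg]
  refine Finset.sum_congr rfl fun x _ => ?_
  rw [map_one]

lemma Cs2v (s : ℕ) (β γ : F) (v : ZMod 3) (c : F)
    (hc : 2 * β + algebraMap (ZMod 3) F v * γ = c) :
    Cs F s β γ 2 v = Sg F s 2 c := by
  rw [Cs_eq F s β γ 2 v c (by rw [map_ofNat, hc]), Sg]
  refine Finset.sum_congr rfl fun x _ => ?_
  rw [map_ofNat]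

lemma expand_eq (s : ℕ) (α : ZMod 3) (β γ : F) :
    ∑ x : Fˣ, (∑ u : ZMod 3, ch (u * (Tm F s β ↑x - α))) * (3 - ∑ v : ZMod 3, ch (v * Bm F γ ↑x))
      = ∑ u : ZMod 3, ch (-(u*α)) * (3 * Cs F s β γ u 0 - ∑ v : ZMod 3, Cs F s β γ u v) := by
  calc ∑ x : Fˣ, (∑ u : ZMod 3, ch (u * (Tm F s β ↑x - α))) * (3 - ∑ v : ZMod 3, ch (v * Bm F γ ↑x))
      = ∑ x : Fˣ, ∑ u : ZMod 3, ch (u * (Tm F s β ↑x - α)) * (3 - ∑ v : ZMod 3, ch (v * Bm F γ ↑x)) := by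
        exact Finset.sum_congr rfl fun x _ => Finset.sum_mul _ _ _
    _ = ∑ u : ZMod 3, ∑ x : Fˣ, ch (u * (Tm F s β ↑x - α)) * (3 - ∑ v : ZMod 3, ch (v * Bm F γ ↑x)) :=
        Finset.sum_comm
    _ = ∑ u : ZMod 3, ∑ x : Fˣ, ch (-(u*α)) * (3 * ch (u * Tm F s β ↑x + 0 * Bm F γ ↑x)
          - ∑ v : ZMod 3, ch (u * Tm F s β ↑x + v * Bm F γ ↑x)) := by
        exact Finset.sum_congr rfl fun u _ => Finset.sum_congr rfl fun x _ => point_eq u α _ _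
    _ = ∑ u : ZMod 3, ch (-(u*α)) * (3 * Cs F s β γ u 0 - ∑ v : ZMod 3, Cs F s β γ u v) := by
        refine Finset.sum_congr rfl fun u _ => ?_
        rw [← Finset.mul_sum, Finset.sum_sub_distrib, ← Finset.mul_sum, Finset.sum_comm]
        rfl

end FieldLemmas

/- ===== end auxiliary lemmas ===== -/

/-- `9·#{d ∈ D_{α,β} : Tr(γd) ≠ 0} = 2q + 2w(α,β) − w(α,β+γ) − w(α,β−γ)`. -/
theorem statement_11 (ℓ m : ℕ) (hℓ : ℓ.Prime) (hℓ3 : 3 < ℓ) (hm : 0 < m)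
    (hprim : orderOf ((3 : ZMod (2 * ℓ ^ m))) = (2 * ℓ ^ m).totient)
    (F : Type*) [Field F] [Fintype F] [Algebra (ZMod 3) F]
    (hq : Fintype.card F = 3 ^ (2 * ℓ ^ m).totient) :
    ∀ (α : ZMod 3) (β γ : F), γ ≠ 0 →
      (9 : ℂ) * (wtd F (2 * ℓ ^ m) α β γ : ℂ) =
        2 * (Fintype.card F : ℂ) + 2 * wab F (2 * ℓ ^ m) α β -
          wab F (2 * ℓ ^ m) α (β + γ) - wab F (2 * ℓ ^ m) α (β - γ) := by
  intro α β γ hγ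
  classical
  have h3F : (3:F) = 0 := charF3 F
  set s : ℕ := (Fintype.card F - 1) / (2 * ℓ ^ m) with hs
  have h1 : (wtd F (2*ℓ^m) α β γ : ℕ)
      = (Finset.univ.filter (fun x : F => (x ≠ 0 ∧ Tm F s β x = α) ∧ Bm F γ x ≠ 0)).card := by
    rw [wtd, ← Set.ncard_coe_finset]
    congr 1
    ext x
    simp [Dset, Tm, Bm, hs]
  have h2 : ((wtd F (2*ℓ^m) α β γ : ℕ) : ℂ)
      = ∑ x : Fˣ, (if Tm F s β ↑x = α ∧ Bm F γ ↑x ≠ 0 then (1:ℂ) else 0) := by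
    rw [h1, ← Finset.sum_boole,
      sum_units_eq F (fun y => if (y ≠ 0 ∧ Tm F s β y = α) ∧ Bm F γ y ≠ 0 then (1:ℂ) else 0)]
    simp [Units.ne_zero]
  have e0 : -((0:ZMod 3)*α) = 0 := by ring
  have e1 : -((1:ZMod 3)*α) = -α := by ring
  have e2 : -((2:ZMod 3)*α) = α := by
    have h3 : (3:ZMod 3) = 0 := by decide
    linear_combination (-α) * h3
  have hC00 := Cs00 F s β γ
  have hC01 : Cs F s β γ 0 1 = -1 := Cs0v F s β γ 1 γ (by rw [map_one, one_mul]) hγ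
  have hC02 : Cs F s β γ 0 2 = -1 :=
    Cs0v F s β γ 2 (2*γ) (by rw [map_ofNat]) (mul_ne_zero (twoF_ne_zero F) hγ)
  have hC10 : Cs F s β γ 1 0 = Sg F s 1 β :=
    Cs1v F s β γ 0 β (by rw [map_zero, zero_mul, add_zero])
  have hC11 : Cs F s β γ 1 1 = Sg F s 1 (β+γ) := Cs1v F s β γ 1 (β+γ) (by rw [map_one, one_mul])
  have hC12 : Cs F s β γ 1 2 = Sg F s 1 (β-γ) :=
    Cs1v F s β γ 2 (β-γ) (by rw [map_ofNat]; linear_combination γ * h3F)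
  have hC20 : Cs F s β γ 2 0 = Sg F s 2 (2*β) :=
    Cs2v F s β γ 0 (2*β) (by rw [map_zero, zero_mul, add_zero])
  have hC21 : Cs F s β γ 2 1 = Sg F s 2 (2*(β-γ)) :=
    Cs2v F s β γ 1 (2*(β-γ)) (by rw [map_one, one_mul]; linear_combination γ * h3F)
  have hC22 : Cs F s β γ 2 2 = Sg F s 2 (2*(β+γ)) :=
    Cs2v F s β γ 2 (2*(β+γ)) (by rw [map_ofNat]; ring)
  have hSsum : ∀ a b : F, Ssum F (2*ℓ^m) a b = Sg F s a b := fun a b => by rw [Ssum, Sg, hs]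
  have hchdef : ∀ t : ZMod 3, zeta3 ^ t.val = ch t := fun _ => rfl
  calc (9:ℂ) * ((wtd F (2*ℓ^m) α β γ : ℕ) : ℂ)
      = ∑ x : Fˣ, (9:ℂ) * (if Tm F s β ↑x = α ∧ Bm F γ ↑x ≠ 0 then (1:ℂ) else 0) := by
        rw [h2, Finset.mul_sum]
    _ = ∑ x : Fˣ, (∑ u : ZMod 3, ch (u * (Tm F s β ↑x - α))) *
          (3 - ∑ v : ZMod 3, ch (v * Bm F γ ↑x)) :=
        Finset.sum_congr rfl fun x _ => indicator_eq α _ _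
    _ = ∑ u : ZMod 3, ch (-(u*α)) * (3 * Cs F s β γ u 0 - ∑ v : ZMod 3, Cs F s β γ u v) :=
        expand_eq F s α β γ
    _ = 2 * (Fintype.card F : ℂ) + 2 * wab F (2 * ℓ ^ m) α β -
          wab F (2 * ℓ ^ m) α (β + γ) - wab F (2 * ℓ ^ m) α (β - γ) := by
        simp only [sum3, e0, e1, e2, ch0, hC00, hC01, hC02, hC10, hC11, hC12, hC20, hC21, hC22,
          wab, hchdef, hSsum]
        ring
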